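/- Let p > 1 be a real number, v ∈ ℝ with v ≠ 0, and μ ∈ ℂ, and set λ_μ := p^μ + p^{1−μ} − p − 1. If there exists r ∈ ℂ with |r| = 1 and r + r⁻¹ − 2 = 2λ_μ/v, then λ_μ is real and (Re λ_μ)·(Re λ_μ + 2v) ≤ 0. -/

import Mathlib

/-- Unitary worldsheet time evolution forces `λ_μ` real with `λ_μ(λ_μ + 2v) ≤ 0`. -/
theorem stmt_6 (p : ℝ) (hp : 1 < p) (v : ℝ) (hv : v ≠ 0) (μ : ℂ)
    (h : ∃ r : ℂ, ‖r‖ = 1 ∧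
      r + r⁻¹ - 2 = 2 * ((p : ℂ) ^ μ + (p : ℂ) ^ (1 - μ) - p - 1) / (v : ℂ)) :
    ((p : ℂ) ^ μ + (p : ℂ) ^ (1 - μ) - p - 1).im = 0 ∧
    ((p : ℂ) ^ μ + (p : ℂ) ^ (1 - μ) - p - 1).re *
      (((p : ℂ) ^ μ + (p : ℂ) ^ (1 - μ) - p - 1).re + 2 * v) ≤ 0 := by
  obtain ⟨r, hr, heq⟩ := h
  set lam : ℂ := (p : ℂ) ^ μ + (p : ℂ) ^ (1 - μ) - p - 1 with hlam
  have hinv : r⁻¹ = starRingEnd ℂ r := Complex.inv_eq_conj hr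
  have hvC : (v : ℂ) ≠ 0 := Complex.ofReal_ne_zero.mpr hv
  have hlameq : lam = (v : ℂ) * (r.re - 1) := by
    have h2 : 2 * lam / (v : ℂ) = ((2 * r.re - 2 : ℝ) : ℂ) := by
      rw [← heq, hinv]
      rw [Complex.add_conj]
      push_cast
      ring
    field_simp at h2
    have : lam = ((2 * r.re - 2 : ℝ) : ℂ) * (v : ℂ) / 2 := by
      field_simp
      linear_combination h2
    rw [this]
    push_cast
    ring
  have hre : lam.re = v * (r.re - 1) := by
    rw [hlameq]
    simp [Complex.mul_re]
  have him : lam.im = 0 := by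
    rw [hlameq]
    simp [Complex.mul_im]
  refine ⟨him, ?_⟩
  have hrre : |r.re| ≤ 1 := by
    have := Complex.abs_re_le_norm r
    rw [hr] at this
    exact this
  rw [hre]
  have : v * (r.re - 1) * (v * (r.re - 1) + 2 * v) = v ^ 2 * (r.re ^ 2 - 1) := by ring
  rw [this]
  apply mul_nonpos_of_nonneg_of_nonpos (sq_nonneg v)
  nlinarith [abs_le.mp hrre]
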